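/- Let K ≥ 1 and R > 0. Define Δ₊^{K-1} = {α ∈ ℝ^K : α_i ≥ 0, Σα_i = 1, and α_i - (2^R - 1)β_i ≥ 0 for all i, where β_i = Σ_{j>i} α_j}, and S_K = {x ∈ ℝ^K : x_j ≥ 0 for all j and Σ_{i=1}^K (2^R)^{i-1} x_i = 1}. Then the map M_B : Δ₊^{K-1} → S_K defined by (M_B(α))_i = α_i - (2^R - 1)β_i is a bijection, with inverse given by α_i = x_i + (2^R - 1) Σ_{j=i+1}^K 2^{R(j-i-1)} x_j. -/
import Mathlib


open Finset

/-- Residual power β_i = Σ_{j>i} α_j. -/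
noncomputable def resid {K : ℕ} (α : Fin K → ℝ) (i : Fin K) : ℝ :=
  ∑ j ∈ Finset.Ioi i, α j

/-- Δ₊^{K-1}: nonnegative power splits summing to 1 with α_i - (2^R-1)β_i ≥ 0. -/
noncomputable def DeltaPlus (K : ℕ) (R : ℝ) : Set (Fin K → ℝ) :=
  {α | (∀ i, 0 ≤ α i) ∧ (∑ i, α i = 1) ∧
    ∀ i, 0 ≤ α i - ((2:ℝ) ^ R - 1) * resid α i}

/-- S_K: nonnegative vectors with Σ (2^R)^{i-1} x_i = 1 (0-indexed exponent i). -/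
noncomputable def SK (K : ℕ) (R : ℝ) : Set (Fin K → ℝ) :=
  {x | (∀ j, 0 ≤ x j) ∧ ∑ i : Fin K, ((2:ℝ) ^ R) ^ (i : ℕ) * x i = 1}

/-- The map M_B(α)_i = α_i - (2^R - 1) β_i. -/
noncomputable def MB {K : ℕ} (R : ℝ) (α : Fin K → ℝ) : Fin K → ℝ :=
  fun i => α i - ((2:ℝ) ^ R - 1) * resid α i

lemma Ioi_empty_of_last {K : ℕ} (i : Fin K) (h : (i:ℕ) + 1 = K) :
    Finset.Ioi i = ∅ := by
  ext j
  have := j.isLt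
  simp only [Finset.mem_Ioi, Fin.lt_def, Finset.notMem_empty, iff_false, not_lt]
  omega

lemma Ioi_insert {K : ℕ} (i i' : Fin K) (h : (i':ℕ) = (i:ℕ) + 1) :
    Finset.Ioi i = insert i' (Finset.Ioi i') := by
  ext j
  simp only [Finset.mem_Ioi, Finset.mem_insert, Fin.lt_def, Fin.ext_iff]
  omega

/-- Key inversion lemma: for any α, Σ_{j>i} c^{j-i-1} MB(α)_j = resid α i. -/
lemma sumIoi_MB {K : ℕ} (R : ℝ) (α : Fin K → ℝ) (i : Fin K) :
    ∑ j ∈ Finset.Ioi i, ((2:ℝ) ^ R) ^ ((j:ℕ) - (i:ℕ) - 1) * MB R α j = resid α i := by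
  suffices h : ∀ m (i : Fin K), K - (i:ℕ) = m + 1 →
      ∑ j ∈ Finset.Ioi i, ((2:ℝ) ^ R) ^ ((j:ℕ) - (i:ℕ) - 1) * MB R α j = resid α i by
    have hi := i.isLt
    exact h (K - (i:ℕ) - 1) i (by omega)
  intro m
  induction m with
  | zero =>
    intro i hi
    have h0 : Finset.Ioi i = ∅ := Ioi_empty_of_last i (by omega)
    simp [h0, resid]
  | succ m ih =>
    intro i hi
    have hlt : (i:ℕ) + 1 < K := by omega
    set i' : Fin K := ⟨(i:ℕ)+1, hlt⟩ with hi'def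
    have hv : (i':ℕ) = (i:ℕ)+1 := rfl
    have hins := Ioi_insert i i' hv
    have hnm : i' ∉ Finset.Ioi i' := by simp
    have hres : resid α i = α i' + resid α i' := by
      rw [resid, hins, Finset.sum_insert hnm]; rfl
    have hsum : ∑ j ∈ Finset.Ioi i', ((2:ℝ) ^ R) ^ ((j:ℕ) - (i:ℕ) - 1) * MB R α j
        = ((2:ℝ) ^ R) * ∑ j ∈ Finset.Ioi i', ((2:ℝ) ^ R) ^ ((j:ℕ) - (i':ℕ) - 1) * MB R α j := by
      rw [Finset.mul_sum]
      refine Finset.sum_congr rfl fun j hj => ?_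
      have hj' : (i':ℕ) < (j:ℕ) := Fin.lt_def.mp (Finset.mem_Ioi.mp hj)
      have he : (j:ℕ) - (i:ℕ) - 1 = ((j:ℕ) - (i':ℕ) - 1) + 1 := by omega
      rw [he, pow_succ]; ring
    have IH := ih i' (by simp [hv]; omega)
    rw [hins, Finset.sum_insert hnm, hsum, IH, hres]
    have he0 : (i':ℕ) - (i:ℕ) - 1 = 0 := by omega
    rw [he0, pow_zero, one_mul]
    show α i' - ((2:ℝ) ^ R - 1) * resid α i' + _ = _
    ring

/-- Candidate inverse map. -/
noncomputable def invMB {K : ℕ} (R : ℝ) (x : Fin K → ℝ) : Fin K → ℝ :=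
  fun i => x i + ((2:ℝ) ^ R - 1) *
    ∑ j ∈ Finset.Ioi i, ((2:ℝ) ^ R) ^ ((j:ℕ) - (i:ℕ) - 1) * x j

/-- resid of invMB equals the weighted tail sum of x. -/
lemma resid_invMB {K : ℕ} (R : ℝ) (x : Fin K → ℝ) (i : Fin K) :
    resid (invMB R x) i = ∑ j ∈ Finset.Ioi i, ((2:ℝ) ^ R) ^ ((j:ℕ) - (i:ℕ) - 1) * x j := by
  suffices h : ∀ m (i : Fin K), K - (i:ℕ) = m + 1 →
      resid (invMB R x) i = ∑ j ∈ Finset.Ioi i, ((2:ℝ) ^ R) ^ ((j:ℕ) - (i:ℕ) - 1) * x j by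
    have hi := i.isLt
    exact h (K - (i:ℕ) - 1) i (by omega)
  intro m
  induction m with
  | zero =>
    intro i hi
    have h0 : Finset.Ioi i = ∅ := Ioi_empty_of_last i (by omega)
    simp [h0, resid]
  | succ m ih =>
    intro i hi
    have hlt : (i:ℕ) + 1 < K := by omega
    set i' : Fin K := ⟨(i:ℕ)+1, hlt⟩ with hi'def
    have hv : (i':ℕ) = (i:ℕ)+1 := rfl
    have hins := Ioi_insert i i' hv
    have hnm : i' ∉ Finset.Ioi i' := by simp
    have hsum : ∑ j ∈ Finset.Ioi i', ((2:ℝ) ^ R) ^ ((j:ℕ) - (i:ℕ) - 1) * x j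
        = ((2:ℝ) ^ R) * ∑ j ∈ Finset.Ioi i', ((2:ℝ) ^ R) ^ ((j:ℕ) - (i':ℕ) - 1) * x j := by
      rw [Finset.mul_sum]
      refine Finset.sum_congr rfl fun j hj => ?_
      have hj' : (i':ℕ) < (j:ℕ) := Fin.lt_def.mp (Finset.mem_Ioi.mp hj)
      have he : (j:ℕ) - (i:ℕ) - 1 = ((j:ℕ) - (i':ℕ) - 1) + 1 := by omega
      rw [he, pow_succ]; ring
    have IH := ih i' (by simp [hv]; omega)
    have hres : resid (invMB R x) i = invMB R x i' + resid (invMB R x) i' := by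
      rw [resid, hins, Finset.sum_insert hnm]; rfl
    rw [hres, IH, hins, Finset.sum_insert hnm, hsum]
    have he0 : (i':ℕ) - (i:ℕ) - 1 = 0 := by omega
    rw [he0, pow_zero, one_mul]
    show x i' + ((2:ℝ) ^ R - 1) * _ + _ = _
    ring

lemma MB_invMB {K : ℕ} (R : ℝ) (x : Fin K → ℝ) : MB R (invMB R x) = x := by
  funext i
  rw [MB]
  simp only [resid_invMB]
  show x i + ((2:ℝ) ^ R - 1) * _ - ((2:ℝ) ^ R - 1) * _ = x i
  ring

lemma univ_split {K : ℕ} (hK : 1 ≤ K) :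
    (Finset.univ : Finset (Fin K)) = insert (⟨0, hK⟩ : Fin K) (Finset.Ioi ⟨0, hK⟩) := by
  ext j
  simp only [Finset.mem_univ, Finset.mem_insert, Finset.mem_Ioi, Fin.lt_def, Fin.ext_iff,
    true_iff]
  omega

/-- Weighted sum identity: Σ c^i x_i = x_0 + c * Σ_{j>0} c^{j-1} x_j. -/
lemma weighted_sum_split {K : ℕ} (hK : 1 ≤ K) (c : ℝ) (x : Fin K → ℝ) :
    ∑ i : Fin K, c ^ (i : ℕ) * x i
      = x ⟨0, hK⟩ + c * ∑ j ∈ Finset.Ioi (⟨0, hK⟩ : Fin K),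
          c ^ ((j:ℕ) - 0 - 1) * x j := by
  rw [univ_split hK, Finset.sum_insert (by simp), Finset.mul_sum]
  congr 1
  · simp
  refine Finset.sum_congr rfl fun j hj => ?_
  have hj' : (0:ℕ) < (j:ℕ) := Fin.lt_def.mp (Finset.mem_Ioi.mp hj)
  have he : (j:ℕ) = ((j:ℕ) - 0 - 1) + 1 := by omega
  rw [show c ^ (j:ℕ) = c ^ (((j:ℕ) - 0 - 1) + 1) from by rw [← he], pow_succ]
  ring

/-- M_B is a bijection from Δ₊^{K-1} to S_K with the stated inverse formula. -/
theorem MB_bijection (K : ℕ) (hK : 1 ≤ K) (R : ℝ) (hR : 0 < R) :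
    Set.BijOn (MB R) (DeltaPlus K R) (SK K R) ∧
    ∀ α ∈ DeltaPlus K R, ∀ i : Fin K,
      α i = MB R α i +
        ((2:ℝ) ^ R - 1) *
          ∑ j ∈ Finset.Ioi i, ((2:ℝ) ^ R) ^ ((j : ℕ) - (i : ℕ) - 1) * MB R α j := by

  have hc1 : (1:ℝ) ≤ (2:ℝ) ^ R := by
    rw [show (1:ℝ) = (2:ℝ) ^ (0:ℝ) by simp]
    exact Real.rpow_le_rpow_of_exponent_le (by norm_num) hR.le
  have hc0 : (0:ℝ) ≤ (2:ℝ) ^ R := by linarith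
  set i0 : Fin K := ⟨0, hK⟩ with hi0
  have key2 : ∀ α : Fin K → ℝ, ∀ i : Fin K,
      α i = MB R α i + ((2:ℝ) ^ R - 1) *
        ∑ j ∈ Finset.Ioi i, ((2:ℝ) ^ R) ^ ((j : ℕ) - (i : ℕ) - 1) * MB R α j := by
    intro α i
    rw [sumIoi_MB]
    show α i = α i - ((2:ℝ) ^ R - 1) * resid α i + ((2:ℝ) ^ R - 1) * resid α i
    ring
  have hsum0 : ∀ α : Fin K → ℝ, ∑ i, α i = α i0 + resid α i0 := by
    intro α
    rw [univ_split hK, Finset.sum_insert (by simp), resid]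
  refine ⟨⟨?_, ?_, ?_⟩, fun α _ i => key2 α i⟩
  · -- MapsTo
    rintro α ⟨hpos, hsum, hcond⟩
    refine ⟨fun j => hcond j, ?_⟩
    rw [weighted_sum_split hK, sumIoi_MB]
    have : MB R α i0 = α i0 - ((2:ℝ) ^ R - 1) * resid α i0 := rfl
    rw [this]
    have := hsum0 α
    rw [this] at hsum
    linarith [hsum]
  · -- InjOn
    rintro α hα α' hα' heq
    funext i
    rw [key2 α i, key2 α' i, heq]
  · -- SurjOn
    rintro x ⟨hxpos, hxsum⟩
    refine ⟨invMB R x, ⟨?_, ?_, ?_⟩, by rw [MB_invMB]⟩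
    · intro i
      have hG : 0 ≤ ∑ j ∈ Finset.Ioi i, ((2:ℝ) ^ R) ^ ((j:ℕ) - (i:ℕ) - 1) * x j :=
        Finset.sum_nonneg fun j _ => mul_nonneg (pow_nonneg hc0 _) (hxpos j)
      have := hxpos i
      show 0 ≤ x i + ((2:ℝ) ^ R - 1) * _
      nlinarith
    · rw [hsum0, resid_invMB]
      rw [weighted_sum_split hK] at hxsum
      show x i0 + ((2:ℝ) ^ R - 1) *
          (∑ j ∈ Finset.Ioi i0, ((2:ℝ) ^ R) ^ ((j:ℕ) - (i0:ℕ) - 1) * x j) +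
          (∑ j ∈ Finset.Ioi i0, ((2:ℝ) ^ R) ^ ((j:ℕ) - (i0:ℕ) - 1) * x j) = 1
      simp only [hi0]
      linarith [hxsum]
    · intro i
      show 0 ≤ MB R (invMB R x) i
      rw [MB_invMB]
      exact hxpos i
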